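/- Suppose for each t ∈ ℝ with t ≠ 0 and each x, P(ε ≤ t | X = x) as well as P(ε ≥ -t | X = x) are each strictly less than 1/2 or strictly greater than 1/2 appropriately so that strict inequality P(v_θᵀ(Y - Wᵀθ)W ≤ 0) < 1/2 holds: specifically, if X is continuous (so that P(v_θᵀW = 0) = 0 and P(v_θᵀW > 0) > 0 or P(v_θᵀW < 0) > 0 with strict conditional tail inequalities), then for any θ ≠ θ₀, with v_θ = (θ₀ - θ)/‖θ₀ - θ‖, P(v_θᵀ(Y - Wᵀθ)W ≤ 0) < 1/2; hence the regression halfspace symmetry center θ₀ is unique. -/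

import Mathlib

open MeasureTheory Matrix

section Aux

variable {d : ℕ} {Ω : Type*} [MeasurableSpace Ω]

/-- Symmetry transfer: the joint probability of `X ∈ A` and `ε ≤ 0` equals that of
`X ∈ A` and `ε > 0`, thanks to the symmetry of the conditional density. -/
lemma aux_sym (μ : Measure Ω) (X : Ω → Fin d → ℝ) (ε : Ω → ℝ)
    (f : (Fin d → ℝ) → ℝ → ℝ) (hfsymm : ∀ x t, f x (-t) = f x t)
    (hjoint : ∀ A : Set (Fin d → ℝ), ∀ B : Set ℝ, MeasurableSet A → MeasurableSet B →
      μ {ω | X ω ∈ A ∧ ε ω ∈ B} =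
        ENNReal.ofReal (∫ x in A, (∫ t in B, f x t) ∂(Measure.map X μ)))
    (A : Set (Fin d → ℝ)) (hA : MeasurableSet A) :
    μ {ω | X ω ∈ A ∧ ε ω ∈ Set.Iic 0} = μ {ω | X ω ∈ A ∧ ε ω ∈ Set.Ioi 0} := by
  rw [hjoint A _ hA measurableSet_Iic, hjoint A _ hA measurableSet_Ioi]
  have hpt : ∀ x, (∫ t in Set.Iic (0:ℝ), f x t) = ∫ t in Set.Ioi (0:ℝ), f x t := by
    intro x
    have h1 := integral_comp_neg_Iic (0:ℝ) (f x)
    simp only [hfsymm, neg_zero] at h1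
    exact h1
  simp only [hpt]

/-- Positivity: if `X ∈ A` has positive probability, then so does `X ∈ A` together with
`ε ∈ (a, b]`, for any nonempty interval. -/
lemma aux_pos (μ : Measure Ω) [IsProbabilityMeasure μ]
    (X : Ω → Fin d → ℝ) (ε : Ω → ℝ) (hX : Measurable X) (hε : Measurable ε)
    (f : (Fin d → ℝ) → ℝ → ℝ) (hfpos : ∀ x t, 0 < f x t) (hfcont : ∀ x, Continuous (f x))
    (hjoint : ∀ A : Set (Fin d → ℝ), ∀ B : Set ℝ, MeasurableSet A → MeasurableSet B →
      μ {ω | X ω ∈ A ∧ ε ω ∈ B} =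
        ENNReal.ofReal (∫ x in A, (∫ t in B, f x t) ∂(Measure.map X μ)))
    (A : Set (Fin d → ℝ)) (hA : MeasurableSet A) (hA0 : μ (X ⁻¹' A) ≠ 0)
    {a b : ℝ} (hab : a < b) :
    μ {ω | X ω ∈ A ∧ ε ω ∈ Set.Ioc a b} ≠ 0 := by
  intro h0
  set ν := Measure.map X μ with hν
  have hmeas : ∀ B : Set ℝ, MeasurableSet B → MeasurableSet {ω | X ω ∈ A ∧ ε ω ∈ B} :=
    fun B hB => (hX hA).inter (hε hB)
  -- find a big interval with positive joint measure
  have cover : X ⁻¹' A ⊆ ⋃ n : ℕ, {ω | X ω ∈ A ∧ ε ω ∈ Set.Ioc (a - n) (b + n)} := by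
    intro ω hω
    obtain ⟨n, hn⟩ := exists_nat_gt (|ε ω| + |a| + |b|)
    refine Set.mem_iUnion.mpr ⟨n, hω, ?_, ?_⟩
    · have h1 := le_abs_self a
      have h2 := neg_abs_le (ε ω)
      have h3 := abs_nonneg b
      linarith
    · have h1 := le_abs_self (ε ω)
      have h2 := neg_abs_le b
      have h3 := abs_nonneg a
      linarith
  have hex : ∃ n : ℕ, μ {ω | X ω ∈ A ∧ ε ω ∈ Set.Ioc (a - n) (b + n)} ≠ 0 := by
    by_contra h
    push_neg at h
    exact hA0 (measure_mono_null cover (measure_iUnion_null h))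
  obtain ⟨n, hn⟩ := hex
  set J := Set.Ioc (a - n) (b + n) with hJdef
  set I := Set.Ioc a b with hIdef
  set D := J \ I with hDdef
  have hIJ : I ⊆ J := Set.Ioc_subset_Ioc (by linarith [Nat.cast_nonneg (α := ℝ) n])
    (by linarith [Nat.cast_nonneg (α := ℝ) n])
  have hDm : MeasurableSet D := measurableSet_Ioc.diff measurableSet_Ioc
  have hsplit : {ω | X ω ∈ A ∧ ε ω ∈ J} =
      {ω | X ω ∈ A ∧ ε ω ∈ I} ∪ {ω | X ω ∈ A ∧ ε ω ∈ D} := by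
    ext ω
    simp only [Set.mem_setOf_eq, Set.mem_union, hDdef, Set.mem_diff]
    constructor
    · rintro ⟨h1, h2⟩
      by_cases hI : ε ω ∈ I
      · exact Or.inl ⟨h1, hI⟩
      · exact Or.inr ⟨h1, h2, hI⟩
    · rintro (⟨h1, h2⟩ | ⟨h1, h2, _⟩)
      · exact ⟨h1, hIJ h2⟩
      · exact ⟨h1, h2⟩
  have hdisj : Disjoint {ω | X ω ∈ A ∧ ε ω ∈ I} {ω | X ω ∈ A ∧ ε ω ∈ D} := by
    rw [Set.disjoint_left]
    rintro ω ⟨_, h2⟩ ⟨_, h3⟩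
    exact h3.2 h2
  have hadd : μ {ω | X ω ∈ A ∧ ε ω ∈ J} = μ {ω | X ω ∈ A ∧ ε ω ∈ D} := by
    rw [hsplit, measure_union hdisj (hmeas D hDm), h0, zero_add]
  have hJ2 := hjoint A J hA measurableSet_Ioc
  have hD2 := hjoint A D hA hDm
  have hJpos : 0 < ∫ x in A, (∫ t in J, f x t) ∂ν := by
    have h := hn
    rw [hJ2] at h
    exact ENNReal.ofReal_pos.mp (pos_iff_ne_zero.mpr h)
  have hDpos : 0 < ∫ x in A, (∫ t in D, f x t) ∂ν := by
    have h := hn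
    rw [hadd, hD2] at h
    exact ENNReal.ofReal_pos.mp (pos_iff_ne_zero.mpr h)
  have hreq : (∫ x in A, (∫ t in J, f x t) ∂ν) = ∫ x in A, (∫ t in D, f x t) ∂ν := by
    have h := hJ2.symm.trans (hadd.trans hD2)
    exact (ENNReal.ofReal_eq_ofReal_iff hJpos.le hDpos.le).mp h
  have hintJ : IntegrableOn (fun x => ∫ t in J, f x t) A ν := by
    by_contra h
    rw [MeasureTheory.integral_undef h] at hJpos
    exact lt_irrefl _ hJpos
  have hintD : IntegrableOn (fun x => ∫ t in D, f x t) A ν := by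
    by_contra h
    rw [MeasureTheory.integral_undef h] at hDpos
    exact lt_irrefl _ hDpos
  have hpt : ∀ x, (∫ t in J, f x t) - (∫ t in D, f x t) = ∫ t in I, f x t := by
    intro x
    have hi1 : IntegrableOn (f x) J := (hfcont x).integrableOn_Ioc
    have hi2 : IntegrableOn (f x) D := hi1.mono_set Set.diff_subset
    have hi3 : IntegrableOn (f x) I := hi1.mono_set hIJ
    have hu : (∫ t in I ∪ D, f x t) = (∫ t in I, f x t) + ∫ t in D, f x t :=
      MeasureTheory.setIntegral_union (Set.disjoint_sdiff_right) hDm hi3 hi2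
    rw [Set.union_diff_cancel hIJ] at hu
    rw [hu]
    ring
  have hIpos : ∀ x, 0 < ∫ t in I, f x t := by
    intro x
    rw [hIdef, ← intervalIntegral.integral_of_le hab.le]
    exact intervalIntegral.intervalIntegral_pos_of_pos ((hfcont x).intervalIntegrable a b)
      (hfpos x) hab
  have hsub : ∫ x in A, ((∫ t in J, f x t) - (∫ t in D, f x t)) ∂ν = 0 := by
    rw [MeasureTheory.integral_sub hintJ hintD]
    exact sub_eq_zero.mpr hreq
  have hae := (MeasureTheory.integral_eq_zero_iff_of_nonneg
      (f := fun x => (∫ t in J, f x t) - (∫ t in D, f x t)) (μ := ν.restrict A)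
      (fun x => by simp only [Pi.zero_apply]; rw [hpt x]; exact (hIpos x).le)
      (hintJ.sub hintD)).mp hsub
  have hres : ν.restrict A Set.univ = 0 := by
    have h := hae
    rw [Filter.EventuallyEq, ae_iff] at h
    have huniv : {x | ¬ ((∫ t in J, f x t) - (∫ t in D, f x t) = (0 : (Fin d → ℝ) → ℝ) x)} =
        Set.univ := by
      ext x
      simp only [Set.mem_setOf_eq, Set.mem_univ, iff_true, Pi.zero_apply]
      rw [hpt x]
      exact (hIpos x).ne'
    rw [huniv] at h
    exact h
  rw [Measure.restrict_apply_univ] at hres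
  rw [hν, Measure.map_apply hX hA] at hres
  exact hA0 hres

end Aux

theorem stmt7 {d : ℕ} {Ω : Type*} [MeasurableSpace Ω] (μ : Measure Ω) [IsProbabilityMeasure μ]
    (X : Ω → Fin d → ℝ) (ε : Ω → ℝ) (Y : Ω → ℝ) (θ₀ : Fin (d + 1) → ℝ)
    (hX : Measurable X) (hε : Measurable ε)
    (W : Ω → Fin (d + 1) → ℝ) (hW : ∀ ω, W ω = Fin.cons 1 (X ω))
    (hY : ∀ ω, Y ω = W ω ⬝ᵥ θ₀ + ε ω)
    -- ε has, conditionally on X, a continuous strictly positive density `f x ·`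
    -- that is symmetric about 0:
    (f : (Fin d → ℝ) → ℝ → ℝ)
    (hfpos : ∀ x t, 0 < f x t)
    (hfsymm : ∀ x t, f x (-t) = f x t)
    (hfcont : ∀ x, Continuous (f x))
    (hjoint : ∀ A : Set (Fin d → ℝ), ∀ B : Set ℝ, MeasurableSet A → MeasurableSet B →
      μ {ω | X ω ∈ A ∧ ε ω ∈ B} =
        ENNReal.ofReal (∫ x in A, (∫ t in B, f x t) ∂(Measure.map X μ)))
    -- X is continuous, so that `vᵀW = 0` has probability zero:
    (hXcont : ∀ v : Fin (d + 1) → ℝ, Real.sqrt (∑ i, v i ^ 2) = 1 →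
      μ {ω | v ⬝ᵥ W ω = 0} = 0) :
    (∀ θ : Fin (d + 1) → ℝ, θ ≠ θ₀ →
      μ {ω | ((Real.sqrt (∑ i, (θ₀ i - θ i) ^ 2))⁻¹ • (θ₀ - θ)) ⬝ᵥ
          ((Y ω - W ω ⬝ᵥ θ) • W ω) ≤ 0} < 1 / 2) ∧
    ∀ θ : Fin (d + 1) → ℝ,
      (∀ u : Fin (d + 1) → ℝ, Real.sqrt (∑ i, u i ^ 2) = 1 →
        1 / 2 ≤ μ {ω | u ⬝ᵥ ((Y ω - W ω ⬝ᵥ θ) • W ω) ≤ 0}) → θ = θ₀ := by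
  -- positivity of the squared distance
  have hsum : ∀ θ : Fin (d + 1) → ℝ, θ ≠ θ₀ → 0 < ∑ i, (θ₀ i - θ i) ^ 2 := by
    intro θ hθ
    have hex : ∃ i, θ₀ i ≠ θ i := by
      by_contra h
      push_neg at h
      exact hθ (funext fun i => (h i).symm)
    obtain ⟨i, hi⟩ := hex
    exact Finset.sum_pos' (fun j _ => sq_nonneg _)
      ⟨i, Finset.mem_univ i, pow_two_pos_of_ne_zero (sub_ne_zero.mpr hi)⟩
  have hunit : ∀ θ : Fin (d + 1) → ℝ, θ ≠ θ₀ →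
      Real.sqrt (∑ i, (((Real.sqrt (∑ j, (θ₀ j - θ j) ^ 2))⁻¹ • (θ₀ - θ)) i) ^ 2) = 1 := by
    intro θ hθ
    have hs := hsum θ hθ
    have hc2 : Real.sqrt (∑ j, (θ₀ j - θ j) ^ 2) ^ 2 = ∑ j, (θ₀ j - θ j) ^ 2 :=
      Real.sq_sqrt hs.le
    have hcpos : 0 < Real.sqrt (∑ j, (θ₀ j - θ j) ^ 2) := Real.sqrt_pos.mpr hs
    have h1 : ∑ i, (((Real.sqrt (∑ j, (θ₀ j - θ j) ^ 2))⁻¹ • (θ₀ - θ)) i) ^ 2 = 1 := by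
      have h2 : ∀ i, (((Real.sqrt (∑ j, (θ₀ j - θ j) ^ 2))⁻¹ • (θ₀ - θ)) i) ^ 2
          = (Real.sqrt (∑ j, (θ₀ j - θ j) ^ 2))⁻¹ ^ 2 * (θ₀ i - θ i) ^ 2 := by
        intro i
        simp [Pi.smul_apply, Pi.sub_apply, smul_eq_mul, mul_pow]
      rw [Finset.sum_congr rfl fun i _ => h2 i, ← Finset.mul_sum, ← hc2]
      field_simp
      rw [Real.sqrt_sq hcpos.le]
    rw [h1, Real.sqrt_one]
  have key : ∀ θ : Fin (d + 1) → ℝ, θ ≠ θ₀ →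
      μ {ω | ((Real.sqrt (∑ i, (θ₀ i - θ i) ^ 2))⁻¹ • (θ₀ - θ)) ⬝ᵥ
          ((Y ω - W ω ⬝ᵥ θ) • W ω) ≤ 0} < 1 / 2 := by
    intro θ hθ
    set c := Real.sqrt (∑ i, (θ₀ i - θ i) ^ 2) with hc
    have hcpos : 0 < c := Real.sqrt_pos.mpr (hsum θ hθ)
    set v : Fin (d + 1) → ℝ := c⁻¹ • (θ₀ - θ) with hv
    have hvunit : Real.sqrt (∑ i, v i ^ 2) = 1 := hunit θ hθ
    set σ : (Fin d → ℝ) → ℝ := fun x => v ⬝ᵥ Fin.cons 1 x with hσ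
    have hσmeas : Measurable σ := by
      have hdef : σ = fun x => ∑ i : Fin (d + 1), v i * Fin.cons 1 x i := rfl
      rw [hdef]
      apply Finset.measurable_sum
      intro i _
      induction i using Fin.cases with
      | zero => simp only [Fin.cons_zero]; exact measurable_const
      | succ j => simp only [Fin.cons_succ]; exact (measurable_pi_apply j).const_mul _
    have hσX : ∀ ω, v ⬝ᵥ W ω = σ (X ω) := fun ω => by rw [hW ω]
    have hEeq : {ω | v ⬝ᵥ ((Y ω - W ω ⬝ᵥ θ) • W ω) ≤ 0} =
        {ω | (c * σ (X ω) + ε ω) * σ (X ω) ≤ 0} := by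
      ext ω
      simp only [Set.mem_setOf_eq]
      have h1 : v ⬝ᵥ ((Y ω - W ω ⬝ᵥ θ) • W ω) = (Y ω - W ω ⬝ᵥ θ) * (v ⬝ᵥ W ω) := by
        rw [dotProduct_smul, smul_eq_mul]
      have h3 : Y ω - W ω ⬝ᵥ θ = c * σ (X ω) + ε ω := by
        rw [hY ω, ← hσX ω]
        have h4 : W ω ⬝ᵥ θ₀ - W ω ⬝ᵥ θ = W ω ⬝ᵥ (θ₀ - θ) := (dotProduct_sub _ _ _).symm
        have h5 : c * (v ⬝ᵥ W ω) = W ω ⬝ᵥ (θ₀ - θ) := by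
          rw [hv, smul_dotProduct, dotProduct_comm (W ω), smul_eq_mul]
          field_simp
        linarith [h4, h5]
      rw [h1, h3, hσX ω]
    rw [hEeq]
    have hZ : μ {ω | σ (X ω) = 0} = 0 := by
      have h := hXcont v hvunit
      have he : {ω | v ⬝ᵥ W ω = 0} = {ω | σ (X ω) = 0} := by
        ext ω
        rw [Set.mem_setOf_eq, Set.mem_setOf_eq, hσX ω]
      rwa [he] at h
    have huniv : ∀ B : Set ℝ,
        {ω | X ω ∈ (Set.univ : Set (Fin d → ℝ)) ∧ ε ω ∈ B} = {ω | ε ω ∈ B} := by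
      intro B; ext ω; simp
    have hsymm_univ : μ {ω | ε ω ∈ Set.Iic 0} = μ {ω | ε ω ∈ Set.Ioi 0} := by
      have h := aux_sym μ X ε f hfsymm hjoint Set.univ MeasurableSet.univ
      rwa [huniv, huniv] at h
    have hcover : μ {ω | ε ω ∈ Set.Iic 0} + μ {ω | ε ω ∈ Set.Ioi 0} = 1 := by
      have hm2 : MeasurableSet {ω | ε ω ∈ Set.Ioi 0} := hε measurableSet_Ioi
      rw [← measure_union ?_ hm2]
      · have he : {ω | ε ω ∈ Set.Iic 0} ∪ {ω | ε ω ∈ Set.Ioi 0} = Set.univ := by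
          ext ω
          simp only [Set.mem_union, Set.mem_setOf_eq, Set.mem_Iic, Set.mem_Ioi, Set.mem_univ,
            iff_true]
          exact le_or_gt _ _
        rw [he, measure_univ]
      · rw [Set.disjoint_left]
        rintro ω h1 h2
        simp only [Set.mem_setOf_eq, Set.mem_Iic] at h1
        simp only [Set.mem_setOf_eq, Set.mem_Ioi] at h2
        linarith
    have hIic_half : μ {ω | ε ω ∈ Set.Iic 0} ≤ 1 / 2 := by
      by_contra h
      push_neg at h
      have h2 := ENNReal.add_lt_add h h
      have h3 := hcover
      rw [← hsymm_univ] at h3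
      rw [h3, ENNReal.add_halves] at h2
      exact lt_irrefl _ h2
    have hIoi_half : μ {ω | ε ω ∈ Set.Ioi 0} ≤ 1 / 2 := hsymm_univ ▸ hIic_half
    have htri : μ {ω | 0 < σ (X ω)} ≠ 0 ∨ μ {ω | σ (X ω) < 0} ≠ 0 := by
      by_contra h
      push_neg at h
      have hall : (Set.univ : Set Ω) ⊆
          {ω | σ (X ω) = 0} ∪ ({ω | 0 < σ (X ω)} ∪ {ω | σ (X ω) < 0}) := by
        intro ω _
        rcases lt_trichotomy (σ (X ω)) 0 with hlt | heq | hgt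
        · exact Or.inr (Or.inr hlt)
        · exact Or.inl heq
        · exact Or.inr (Or.inl hgt)
      have h1 : (1 : ENNReal) ≤ 0 := by
        calc (1 : ENNReal) = μ Set.univ := (measure_univ).symm
        _ ≤ μ ({ω | σ (X ω) = 0} ∪ ({ω | 0 < σ (X ω)} ∪ {ω | σ (X ω) < 0})) :=
            measure_mono hall
        _ ≤ μ {ω | σ (X ω) = 0} + (μ {ω | 0 < σ (X ω)} + μ {ω | σ (X ω) < 0}) :=
            le_trans (measure_union_le _ _) (by gcongr; exact measure_union_le _ _)
        _ = 0 := by rw [hZ, h.1, h.2]; simp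
      simp at h1
    rcases htri with hside | hside
    · -- the positive side of σ has positive probability
      have hq : ∃ q : ℝ, 0 < q ∧ μ (X ⁻¹' (σ ⁻¹' Set.Ioi q)) ≠ 0 := by
        by_contra h
        push_neg at h
        have hcov : {ω | 0 < σ (X ω)} ⊆
            ⋃ n : ℕ, X ⁻¹' (σ ⁻¹' Set.Ioi (((n : ℝ) + 1)⁻¹)) := by
          intro ω hω
          simp only [Set.mem_setOf_eq] at hω
          obtain ⟨n, hn⟩ := exists_nat_one_div_lt hω
          refine Set.mem_iUnion.mpr ⟨n, ?_⟩
          simp only [Set.mem_preimage, Set.mem_Ioi]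
          rw [one_div] at hn
          exact hn
        exact hside (measure_mono_null hcov (measure_iUnion_null fun n =>
          h _ (by positivity)))
      obtain ⟨q, hq0, hAq⟩ := hq
      have hcq : 0 < c * q := mul_pos hcpos hq0
      set Am := σ ⁻¹' Set.Iio 0 with hAm
      set Aq := σ ⁻¹' Set.Ioi q with hAqdef
      set Amid := σ ⁻¹' Set.Ioi 0 \ Aq with hAmid
      have hAmm : MeasurableSet Am := hσmeas measurableSet_Iio
      have hAqm : MeasurableSet Aq := hσmeas measurableSet_Ioi
      have hAmidm : MeasurableSet Amid := (hσmeas measurableSet_Ioi).diff hAqm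
      set T1 := {ω | X ω ∈ Am ∧ ε ω ∈ Set.Ioi 0} with hT1d
      set T1' := {ω | X ω ∈ Am ∧ ε ω ∈ Set.Iic 0} with hT1'd
      set T2 := {ω | X ω ∈ Amid ∧ ε ω ∈ Set.Iio 0} with hT2d
      set T3 := {ω | X ω ∈ Aq ∧ ε ω ∈ Set.Iio (-(c * q))} with hT3d
      set TΔ := {ω | X ω ∈ Aq ∧ ε ω ∈ Set.Ioc (-(c * q)) (-(c * q) / 2)} with hTDd
      have hT1'm : MeasurableSet T1' := (hX hAmm).inter (hε measurableSet_Iic)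
      have hT2m : MeasurableSet T2 := (hX hAmidm).inter (hε measurableSet_Iio)
      have hT3m : MeasurableSet T3 := (hX hAqm).inter (hε measurableSet_Iio)
      have hTDm : MeasurableSet TΔ := (hX hAqm).inter (hε measurableSet_Ioc)
      have hsubE : {ω | (c * σ (X ω) + ε ω) * σ (X ω) ≤ 0} ⊆
          T1 ∪ T2 ∪ T3 ∪ {ω | σ (X ω) = 0} := by
        intro ω hω
        simp only [Set.mem_setOf_eq] at hω
        rcases lt_trichotomy (σ (X ω)) 0 with hlt | heq | hgt
        · refine Or.inl (Or.inl (Or.inl ⟨hlt, ?_⟩))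
          have h1 : 0 ≤ c * σ (X ω) + ε ω := by
            by_contra hcon
            push_neg at hcon
            have := mul_pos_of_neg_of_neg hcon hlt
            linarith
          show (0 : ℝ) < ε ω
          nlinarith [mul_pos hcpos (neg_pos.mpr hlt)]
        · exact Or.inr heq
        · have h1 : c * σ (X ω) + ε ω ≤ 0 := by
            by_contra hcon
            push_neg at hcon
            have := mul_pos hcon hgt
            linarith
          by_cases hgtq : q < σ (X ω)
          · refine Or.inl (Or.inr ⟨hgtq, ?_⟩)
            show ε ω < -(c * q)
            have h2 : c * q < c * σ (X ω) := mul_lt_mul_of_pos_left hgtq hcpos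
            linarith
          · refine Or.inl (Or.inl (Or.inr ⟨⟨hgt, hgtq⟩, ?_⟩))
            show ε ω < 0
            have h2 : 0 < c * σ (X ω) := mul_pos hcpos hgt
            linarith
      have hET : μ {ω | (c * σ (X ω) + ε ω) * σ (X ω) ≤ 0} ≤ μ T1 + μ T2 + μ T3 := by
        calc μ {ω | (c * σ (X ω) + ε ω) * σ (X ω) ≤ 0}
            ≤ μ (T1 ∪ T2 ∪ T3 ∪ {ω | σ (X ω) = 0}) := measure_mono hsubE
        _ ≤ μ (T1 ∪ T2 ∪ T3) + μ {ω | σ (X ω) = 0} := measure_union_le _ _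
        _ = μ (T1 ∪ T2 ∪ T3) := by rw [hZ, add_zero]
        _ ≤ μ (T1 ∪ T2) + μ T3 := measure_union_le _ _
        _ ≤ μ T1 + μ T2 + μ T3 := by gcongr; exact measure_union_le _ _
      have hT1 : μ T1 = μ T1' := (aux_sym μ X ε f hfsymm hjoint Am hAmm).symm
      have d34 : Disjoint T3 TΔ := by
        rw [Set.disjoint_left]
        rintro ω ⟨_, h2⟩ ⟨_, h3⟩
        simp only [Set.mem_Iio] at h2
        simp only [Set.mem_Ioc] at h3
        linarith [h3.1]
      have d2 : Disjoint T2 (T3 ∪ TΔ) := by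
        rw [Set.disjoint_left]
        rintro ω ⟨h1, _⟩ (⟨h2, _⟩ | ⟨h2, _⟩) <;> exact h1.2 h2
      have d1 : Disjoint T1' (T2 ∪ (T3 ∪ TΔ)) := by
        rw [Set.disjoint_left]
        rintro ω ⟨h1, _⟩ hmem
        have h1' : σ (X ω) < 0 := h1
        rcases hmem with ⟨h2, _⟩ | ⟨h2, _⟩ | ⟨h2, _⟩
        · have h2' : 0 < σ (X ω) := h2.1
          linarith
        · have h2' : q < σ (X ω) := h2
          linarith
        · have h2' : q < σ (X ω) := h2
          linarith
      have hsum4 : μ T1' + μ T2 + μ T3 + μ TΔ ≤ μ {ω | ε ω ∈ Set.Iic 0} := by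
        have u34 : μ (T3 ∪ TΔ) = μ T3 + μ TΔ := measure_union d34 hTDm
        have u2 : μ (T2 ∪ (T3 ∪ TΔ)) = μ T2 + (μ T3 + μ TΔ) := by
          rw [measure_union d2 (hT3m.union hTDm), u34]
        have u1 : μ (T1' ∪ (T2 ∪ (T3 ∪ TΔ))) = μ T1' + (μ T2 + (μ T3 + μ TΔ)) := by
          rw [measure_union d1 (hT2m.union (hT3m.union hTDm)), u2]
        calc μ T1' + μ T2 + μ T3 + μ TΔ = μ T1' + (μ T2 + (μ T3 + μ TΔ)) := by ring
        _ = μ (T1' ∪ (T2 ∪ (T3 ∪ TΔ))) := u1.symm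
        _ ≤ μ {ω | ε ω ∈ Set.Iic 0} := by
            apply measure_mono
            rintro ω (⟨_, h2⟩ | ⟨_, h2⟩ | ⟨_, h2⟩ | ⟨_, h2⟩) <;>
              simp only [Set.mem_setOf_eq, Set.mem_Iic, Set.mem_Iio, Set.mem_Ioc] at h2 ⊢ <;>
              linarith [h2]
      have hΔ : μ TΔ ≠ 0 :=
        aux_pos μ X ε hX hε f hfpos hfcont hjoint Aq hAqm hAq
          (by linarith : -(c * q) < -(c * q) / 2)
      have hchain : μ {ω | (c * σ (X ω) + ε ω) * σ (X ω) ≤ 0} + μ TΔ ≤ 1 / 2 := by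
        calc μ {ω | (c * σ (X ω) + ε ω) * σ (X ω) ≤ 0} + μ TΔ
            ≤ μ T1 + μ T2 + μ T3 + μ TΔ := add_le_add_left hET _
        _ = μ T1' + μ T2 + μ T3 + μ TΔ := by rw [hT1]
        _ ≤ μ {ω | ε ω ∈ Set.Iic 0} := hsum4
        _ ≤ 1 / 2 := hIic_half
      calc μ {ω | (c * σ (X ω) + ε ω) * σ (X ω) ≤ 0}
          < μ {ω | (c * σ (X ω) + ε ω) * σ (X ω) ≤ 0} + μ TΔ :=
            ENNReal.lt_add_right (measure_ne_top μ _) hΔ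
      _ ≤ 1 / 2 := hchain
    · -- the negative side of σ has positive probability
      have hq : ∃ q : ℝ, 0 < q ∧ μ (X ⁻¹' (σ ⁻¹' Set.Iio (-q))) ≠ 0 := by
        by_contra h
        push_neg at h
        have hcov : {ω | σ (X ω) < 0} ⊆
            ⋃ n : ℕ, X ⁻¹' (σ ⁻¹' Set.Iio (-((n : ℝ) + 1)⁻¹)) := by
          intro ω hω
          simp only [Set.mem_setOf_eq] at hω
          obtain ⟨n, hn⟩ := exists_nat_one_div_lt (neg_pos.mpr hω)
          refine Set.mem_iUnion.mpr ⟨n, ?_⟩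
          simp only [Set.mem_preimage, Set.mem_Iio]
          rw [one_div] at hn
          linarith
        exact hside (measure_mono_null hcov (measure_iUnion_null fun n =>
          h _ (by positivity)))
      obtain ⟨q, hq0, hAq⟩ := hq
      have hcq : 0 < c * q := mul_pos hcpos hq0
      set Ap := σ ⁻¹' Set.Ioi 0 with hAp
      set Aq := σ ⁻¹' Set.Iio (-q) with hAqdef
      set Amid := σ ⁻¹' Set.Iio 0 \ Aq with hAmid
      have hApm : MeasurableSet Ap := hσmeas measurableSet_Ioi
      have hAqm : MeasurableSet Aq := hσmeas measurableSet_Iio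
      have hAmidm : MeasurableSet Amid := (hσmeas measurableSet_Iio).diff hAqm
      set T1 := {ω | X ω ∈ Ap ∧ ε ω ∈ Set.Iio 0} with hT1d
      set T1' := {ω | X ω ∈ Ap ∧ ε ω ∈ Set.Ioi 0} with hT1'd
      set T2 := {ω | X ω ∈ Amid ∧ ε ω ∈ Set.Ioi 0} with hT2d
      set T3 := {ω | X ω ∈ Aq ∧ ε ω ∈ Set.Ioi (c * q)} with hT3d
      set TΔ := {ω | X ω ∈ Aq ∧ ε ω ∈ Set.Ioc (c * q / 2) (c * q)} with hTDd
      have hT1'm : MeasurableSet T1' := (hX hApm).inter (hε measurableSet_Ioi)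
      have hT2m : MeasurableSet T2 := (hX hAmidm).inter (hε measurableSet_Ioi)
      have hT3m : MeasurableSet T3 := (hX hAqm).inter (hε measurableSet_Ioi)
      have hTDm : MeasurableSet TΔ := (hX hAqm).inter (hε measurableSet_Ioc)
      have hsubE : {ω | (c * σ (X ω) + ε ω) * σ (X ω) ≤ 0} ⊆
          T1 ∪ T2 ∪ T3 ∪ {ω | σ (X ω) = 0} := by
        intro ω hω
        simp only [Set.mem_setOf_eq] at hω
        rcases lt_trichotomy (σ (X ω)) 0 with hlt | heq | hgt
        · have h1 : 0 ≤ c * σ (X ω) + ε ω := by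
            by_contra hcon
            push_neg at hcon
            have := mul_pos_of_neg_of_neg hcon hlt
            linarith
          by_cases hltq : σ (X ω) < -q
          · refine Or.inl (Or.inr ⟨hltq, ?_⟩)
            show c * q < ε ω
            have h2 : c * σ (X ω) < c * (-q) := mul_lt_mul_of_pos_left hltq hcpos
            nlinarith
          · refine Or.inl (Or.inl (Or.inr ⟨⟨hlt, hltq⟩, ?_⟩))
            show (0 : ℝ) < ε ω
            nlinarith [mul_pos hcpos (neg_pos.mpr hlt)]
        · exact Or.inr heq
        · refine Or.inl (Or.inl (Or.inl ⟨hgt, ?_⟩))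
          have h1 : c * σ (X ω) + ε ω ≤ 0 := by
            by_contra hcon
            push_neg at hcon
            have := mul_pos hcon hgt
            linarith
          show ε ω < 0
          have h2 : 0 < c * σ (X ω) := mul_pos hcpos hgt
          linarith
      have hET : μ {ω | (c * σ (X ω) + ε ω) * σ (X ω) ≤ 0} ≤ μ T1 + μ T2 + μ T3 := by
        calc μ {ω | (c * σ (X ω) + ε ω) * σ (X ω) ≤ 0}
            ≤ μ (T1 ∪ T2 ∪ T3 ∪ {ω | σ (X ω) = 0}) := measure_mono hsubE
        _ ≤ μ (T1 ∪ T2 ∪ T3) + μ {ω | σ (X ω) = 0} := measure_union_le _ _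
        _ = μ (T1 ∪ T2 ∪ T3) := by rw [hZ, add_zero]
        _ ≤ μ (T1 ∪ T2) + μ T3 := measure_union_le _ _
        _ ≤ μ T1 + μ T2 + μ T3 := by gcongr; exact measure_union_le _ _
      have hT1 : μ T1 ≤ μ T1' := by
        have hmono : μ T1 ≤ μ {ω | X ω ∈ Ap ∧ ε ω ∈ Set.Iic 0} := by
          apply measure_mono
          rintro ω ⟨h1, h2⟩
          have h2' : ε ω < 0 := h2
          exact ⟨h1, Set.mem_Iic.mpr h2'.le⟩
        have heq := aux_sym μ X ε f hfsymm hjoint Ap hApm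
        rw [heq] at hmono
        exact hmono
      have d34 : Disjoint T3 TΔ := by
        rw [Set.disjoint_left]
        rintro ω ⟨_, h2⟩ ⟨_, h3⟩
        simp only [Set.mem_Ioi] at h2
        simp only [Set.mem_Ioc] at h3
        linarith [h3.2]
      have d2 : Disjoint T2 (T3 ∪ TΔ) := by
        rw [Set.disjoint_left]
        rintro ω ⟨h1, _⟩ (⟨h2, _⟩ | ⟨h2, _⟩) <;> exact h1.2 h2
      have d1 : Disjoint T1' (T2 ∪ (T3 ∪ TΔ)) := by
        rw [Set.disjoint_left]
        rintro ω ⟨h1, _⟩ hmem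
        have h1' : 0 < σ (X ω) := h1
        rcases hmem with ⟨h2, _⟩ | ⟨h2, _⟩ | ⟨h2, _⟩
        · have h2' : σ (X ω) < 0 := h2.1
          linarith
        · have h2' : σ (X ω) < -q := h2
          linarith
        · have h2' : σ (X ω) < -q := h2
          linarith
      have hsum4 : μ T1' + μ T2 + μ T3 + μ TΔ ≤ μ {ω | ε ω ∈ Set.Ioi 0} := by
        have u34 : μ (T3 ∪ TΔ) = μ T3 + μ TΔ := measure_union d34 hTDm
        have u2 : μ (T2 ∪ (T3 ∪ TΔ)) = μ T2 + (μ T3 + μ TΔ) := by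
          rw [measure_union d2 (hT3m.union hTDm), u34]
        have u1 : μ (T1' ∪ (T2 ∪ (T3 ∪ TΔ))) = μ T1' + (μ T2 + (μ T3 + μ TΔ)) := by
          rw [measure_union d1 (hT2m.union (hT3m.union hTDm)), u2]
        calc μ T1' + μ T2 + μ T3 + μ TΔ = μ T1' + (μ T2 + (μ T3 + μ TΔ)) := by ring
        _ = μ (T1' ∪ (T2 ∪ (T3 ∪ TΔ))) := u1.symm
        _ ≤ μ {ω | ε ω ∈ Set.Ioi 0} := by
            apply measure_mono
            rintro ω (⟨_, h2⟩ | ⟨_, h2⟩ | ⟨_, h2⟩ | ⟨_, h2⟩) <;>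
              simp only [Set.mem_setOf_eq, Set.mem_Ioi, Set.mem_Ioc] at h2 ⊢ <;>
              linarith [h2]
      have hΔ : μ TΔ ≠ 0 :=
        aux_pos μ X ε hX hε f hfpos hfcont hjoint Aq hAqm hAq
          (by linarith : c * q / 2 < c * q)
      have hchain : μ {ω | (c * σ (X ω) + ε ω) * σ (X ω) ≤ 0} + μ TΔ ≤ 1 / 2 := by
        calc μ {ω | (c * σ (X ω) + ε ω) * σ (X ω) ≤ 0} + μ TΔ
            ≤ μ T1 + μ T2 + μ T3 + μ TΔ := add_le_add_left hET _
        _ ≤ μ T1' + μ T2 + μ T3 + μ TΔ := by gcongr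
        _ ≤ μ {ω | ε ω ∈ Set.Ioi 0} := hsum4
        _ ≤ 1 / 2 := hIoi_half
      calc μ {ω | (c * σ (X ω) + ε ω) * σ (X ω) ≤ 0}
          < μ {ω | (c * σ (X ω) + ε ω) * σ (X ω) ≤ 0} + μ TΔ :=
            ENNReal.lt_add_right (measure_ne_top μ _) hΔ
      _ ≤ 1 / 2 := hchain
  refine ⟨key, ?_⟩
  intro θ hhalf
  by_contra hne
  have h1 := key θ hne
  have h2 := hhalf ((Real.sqrt (∑ i, (θ₀ i - θ i) ^ 2))⁻¹ • (θ₀ - θ)) (hunit θ hne)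
  exact absurd (lt_of_le_of_lt h2 h1) (lt_irrefl _)
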